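/- The function t ↦ −log t on (0,∞) admits the integral representation −log t = −(t−1) + ∫₀^∞ (t−1)²/((t+s)(1+s)²) ds for all t > 0. -/

import Mathlib

open MeasureTheory Set Filter Topology

/-- Integral representation of `-log` :
`−log t = −(t−1) + ∫₀^∞ (t−1)²/((t+s)(1+s)²) ds` for every `t > 0`. -/
theorem neg_log_integral_repr (t : ℝ) (ht : 0 < t) :
    -Real.log t
      = -(t - 1) + ∫ s in Ioi (0 : ℝ), (t - 1) ^ 2 / ((t + s) * (1 + s) ^ 2) := by
  set f : ℝ → ℝ := fun s => Real.log (t + s) - Real.log (1 + s) - (t - 1) / (1 + s) with hfdef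
  have hderiv : ∀ s ∈ Ici (0:ℝ), HasDerivAt f ((t - 1) ^ 2 / ((t + s) * (1 + s) ^ 2)) s := by
    intro s hs
    have hs0 : (0:ℝ) ≤ s := hs
    have h1 : (0:ℝ) < t + s := by linarith
    have h2 : (0:ℝ) < 1 + s := by linarith
    have d1 : HasDerivAt (fun s : ℝ => Real.log (t + s)) (1 / (t + s)) s := by
      simpa using (((hasDerivAt_id s).const_add t).log h1.ne')
    have d2 : HasDerivAt (fun s : ℝ => Real.log (1 + s)) (1 / (1 + s)) s := by
      simpa using (((hasDerivAt_id s).const_add 1).log h2.ne')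
    have d3 : HasDerivAt (fun s : ℝ => (t - 1) / (1 + s))
        ((t - 1) * (-1 / (1 + s) ^ 2)) s := by
      have := (((hasDerivAt_id s).const_add 1).inv h2.ne').const_mul (t - 1)
      simpa [div_eq_mul_inv] using this
    have := (d1.sub d2).sub d3
    convert this using 1
    show (t - 1) ^ 2 / ((t + s) * (1 + s) ^ 2) = 1 / (t + s) - 1 / (1 + s) - (t - 1) * (-1 / (1 + s) ^ 2)
    field_simp
    ring
    rfl
    rfl
    rfl
  have hlim : Tendsto f atTop (𝓝 0) := by
    have hsmall : Tendsto (fun s : ℝ => (t - 1) / (1 + s)) atTop (𝓝 0) :=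
      tendsto_const_nhds.div_atTop (tendsto_atTop_add_const_left _ 1 tendsto_id)
    have hlog : Tendsto (fun s : ℝ => Real.log (t + s) - Real.log (1 + s)) atTop (𝓝 0) := by
      have h1 : Tendsto (fun s : ℝ => 1 + (t - 1) / (1 + s)) atTop (𝓝 1) := by
        simpa using tendsto_const_nhds.add hsmall
      have h2 : Tendsto (fun s : ℝ => Real.log (1 + (t - 1) / (1 + s))) atTop (𝓝 0) := by
        have := (Real.continuousAt_log one_ne_zero).tendsto.comp h1
        simpa [Function.comp_def] using this
      refine h2.congr' ?_
      filter_upwards [eventually_gt_atTop (0:ℝ)] with s hs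
      have h1' : (0:ℝ) < t + s := by linarith
      have h2' : (0:ℝ) < 1 + s := by linarith
      rw [← Real.log_div h1'.ne' h2'.ne']
      congr 1
      field_simp
      ring
    simpa using hlog.sub hsmall
  have key : ∫ s in Ioi (0:ℝ), (t - 1) ^ 2 / ((t + s) * (1 + s) ^ 2) = 0 - f 0 := by
    refine integral_Ioi_of_hasDerivAt_of_nonneg' hderiv ?_ hlim
    intro s hs
    have hs0 : (0:ℝ) < s := hs
    positivity
  rw [key]
  simp [hfdef]
  ring
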